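/- If W ~ Binomial(m, R) and for δ ∈ (0,1) the one-sided Clopper–Pearson upper bound after observing w failures is defined as R_upper(w) = BetaInv(1 − δ; w + 1, m − w) (the (1−δ)-quantile of the Beta(w+1, m−w) distribution, with R_upper(m) = 1), then Pr(R ≤ R_upper(W)) ≥ 1 − δ. -/

import Mathlib

open MeasureTheory

/-- The regularized incomplete beta function `I_x(a, b)`. -/
noncomputable def regIncBeta (a b x : ℝ) : ℝ :=
  (∫ u in (0 : ℝ)..x, u ^ (a - 1) * (1 - u) ^ (b - 1)) /
    (Real.Gamma a * Real.Gamma b / Real.Gamma (a + b))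

/-- `BetaInv(p; a, b)`: the `p`-th quantile of the `Beta(a, b)` distribution. -/
noncomputable def betaInv (p a b : ℝ) : ℝ :=
  sInf {x : ℝ | x ∈ Set.Icc (0 : ℝ) 1 ∧ p ≤ regIncBeta a b x}

-- telescoping derivative of binomial tail
lemma cp_hasDeriv (m w : ℕ) (hw : w < m) (x : ℝ) :
    HasDerivAt (fun x : ℝ => ∑ k ∈ Finset.Ioc w m, (m.choose k : ℝ) * x ^ k * (1 - x) ^ (m - k))
      ((m : ℝ) * ((m - 1).choose w : ℝ) * x ^ w * (1 - x) ^ (m - 1 - w)) x := by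
  set g : ℕ → ℝ := fun j => (m : ℝ) * ((m - 1).choose j : ℝ) * x ^ j * (1 - x) ^ (m - 1 - j)
    with hg
  have key : ∀ k ∈ Finset.Ioc w m,
      HasDerivAt (fun x : ℝ => (m.choose k : ℝ) * x ^ k * (1 - x) ^ (m - k))
        (g (k - 1) - g k) x := by
    intro k hk
    rw [Finset.mem_Ioc] at hk
    obtain ⟨hk1, hk2⟩ := hk
    have h1 : HasDerivAt (fun x : ℝ => x ^ k) ((k : ℝ) * x ^ (k - 1)) x := by
      simpa using hasDerivAt_pow k x
    have h2 : HasDerivAt (fun x : ℝ => (1 - x) ^ (m - k))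
        (-(((m - k : ℕ) : ℝ) * (1 - x) ^ (m - k - 1))) x := by
      have hi : HasDerivAt (fun x : ℝ => 1 - x) (-1) x := by
        simpa using (hasDerivAt_id x).const_sub (1:ℝ)
      have := (hasDerivAt_pow (m - k) (1 - x)).comp x hi
      refine this.congr_deriv ?_; ring
    have h3 := ((h1.const_mul ((m.choose k : ℝ))).mul h2)
    refine h3.congr_deriv ?_
    -- coefficient identities
    have c1 : (m : ℝ) * ((m - 1).choose (k - 1) : ℝ) = (k : ℝ) * (m.choose k : ℝ) := by
      have := Nat.add_one_mul_choose_eq (m - 1) (k - 1)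
      have hm' : m - 1 + 1 = m := by omega
      have hk' : k - 1 + 1 = k := by omega
      rw [hm', hk'] at this
      exact_mod_cast congrArg (fun n : ℕ => (n : ℝ)) (by rw [this]; ring)
    have c2 : (m : ℝ) * ((m - 1).choose k : ℝ) = ((m - k : ℕ) : ℝ) * (m.choose k : ℝ) := by
      have := Nat.choose_mul_succ_eq (m - 1) k
      have hm' : m - 1 + 1 = m := by omega
      rw [hm'] at this
      exact_mod_cast congrArg (fun n : ℕ => (n : ℝ)) (by rw [Nat.mul_comm, this]; ring)
    have e1 : m - 1 - (k - 1) = m - k := by omega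
    have e2 : m - 1 - k = m - k - 1 := by omega
    simp only [hg, e1, e2, c1, c2]
    ring
  have hsum := HasDerivAt.fun_sum key
  refine hsum.congr_deriv ?_
  symm
  -- telescope
  have : Finset.Ioc w m = Finset.Ico (w + 1) (m + 1) := by
    ext k; simp [Nat.lt_succ_iff]
  rw [this, Finset.sum_Ico_eq_sum_range]
  have hre : ∀ i, g (w + 1 + i - 1) - g (w + 1 + i) = g (w + i) - g (w + (i + 1)) := by
    intro i; congr 2 <;> omega
  rw [Finset.sum_congr rfl (fun i _ => hre i), Finset.sum_range_sub' (fun i => g (w + i))]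
  have h1 : w + (m + 1 - (w + 1)) = m := by omega
  rw [h1]
  have : g m = 0 := by
    simp [hg, Nat.choose_eq_zero_of_lt (show m - 1 < m by omega)]
  rw [this, sub_zero]
  simp [hg]

lemma cp_num_eq (m w : ℕ) (hw : w < m) (R : ℝ) :
    (∫ u in (0:ℝ)..R, u ^ (((w:ℝ) + 1) - 1) * (1 - u) ^ (((m:ℝ) - (w:ℝ)) - 1))
      = ∫ u in (0:ℝ)..R, u ^ w * (1 - u) ^ (m - 1 - w) := by
  have hc : ((m - 1 - w : ℕ) : ℝ) = (m:ℝ) - (w:ℝ) - 1 := by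
    have h : m - 1 - w = m - (1 + w) := by omega
    rw [h, Nat.cast_sub (by omega)]
    push_cast; ring
  congr 1
  funext u
  rw [show ((w:ℝ) + 1) - 1 = ((w:ℕ):ℝ) by ring, Real.rpow_natCast,
    show ((m:ℝ) - (w:ℝ)) - 1 = ((m - 1 - w : ℕ):ℝ) by rw [hc], Real.rpow_natCast]

lemma cp_regIncBeta_eq (m w : ℕ) (hw : w < m) (R : ℝ) :
    regIncBeta ((w:ℝ) + 1) ((m:ℝ) - (w:ℝ)) R
      = ∑ k ∈ Finset.Ioc w m, (m.choose k : ℝ) * R ^ k * (1 - R) ^ (m - k) := by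
  have hcont : Continuous fun u : ℝ =>
      (m : ℝ) * ((m - 1).choose w : ℝ) * u ^ w * (1 - u) ^ (m - 1 - w) := by fun_prop
  have hftc := intervalIntegral.integral_eq_sub_of_hasDerivAt
    (f := fun x : ℝ => ∑ k ∈ Finset.Ioc w m, (m.choose k : ℝ) * x ^ k * (1 - x) ^ (m - k))
    (fun t _ => cp_hasDeriv m w hw t) (hcont.intervalIntegrable 0 R)
  have hF0 : (∑ k ∈ Finset.Ioc w m, (m.choose k : ℝ) * (0:ℝ) ^ k * (1 - 0) ^ (m - k)) = 0 := by
    apply Finset.sum_eq_zero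
    intro k hk
    rw [Finset.mem_Ioc] at hk
    rw [zero_pow (by omega)]
    ring
  beta_reduce at hftc
  rw [hF0, sub_zero] at hftc
  have hmc : (∫ u in (0:ℝ)..R, (m : ℝ) * ((m - 1).choose w : ℝ) * u ^ w * (1 - u) ^ (m - 1 - w))
      = ((m : ℝ) * ((m - 1).choose w : ℝ)) * ∫ u in (0:ℝ)..R, u ^ w * (1 - u) ^ (m - 1 - w) := by
    rw [← intervalIntegral.integral_const_mul]
    congr 1; funext u; ring
  rw [hmc] at hftc
  -- gamma values
  have hg1 : Real.Gamma ((w:ℝ) + 1) = (w.factorial : ℝ) := Real.Gamma_nat_eq_factorial w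
  have hc : (m:ℝ) - (w:ℝ) = ((m - 1 - w : ℕ) : ℝ) + 1 := by
    have h : m - 1 - w = m - (1 + w) := by omega
    rw [h, Nat.cast_sub (by omega)]
    push_cast; ring
  have hg2 : Real.Gamma ((m:ℝ) - (w:ℝ)) = ((m - 1 - w).factorial : ℝ) := by
    rw [hc, Real.Gamma_nat_eq_factorial]
  have hg3 : Real.Gamma (((w:ℝ) + 1) + ((m:ℝ) - (w:ℝ))) = (m.factorial : ℝ) := by
    rw [show ((w:ℝ) + 1) + ((m:ℝ) - (w:ℝ)) = (m:ℝ) + 1 by ring, Real.Gamma_nat_eq_factorial]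
  have hfac : (m:ℝ) * ((m - 1).choose w : ℝ) * (w.factorial : ℝ) * ((m - 1 - w).factorial : ℝ)
      = (m.factorial : ℝ) := by
    have h1 : (m - 1).choose w * w.factorial * (m - 1 - w).factorial = (m - 1).factorial := by
      have := Nat.choose_mul_factorial_mul_factorial (show w ≤ m - 1 by omega)
      simpa using this
    have h2 : m * (m - 1).factorial = m.factorial := by
      obtain ⟨n, rfl⟩ : ∃ n, m = n + 1 := ⟨m - 1, by omega⟩
      simp [Nat.factorial_succ]
    push_cast [← h2, ← h1]
    ring
  rw [regIncBeta, cp_num_eq m w hw, hg1, hg2, hg3, ← hftc]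
  have h1 : ((w.factorial : ℝ)) ≠ 0 := by positivity
  have h2 : (((m - 1 - w).factorial : ℝ)) ≠ 0 := by positivity
  have h3 : ((m.factorial : ℝ)) ≠ 0 := by positivity
  field_simp
  linear_combination -(∫ u in (0:ℝ)..R, u ^ w * (1 - u) ^ (m - 1 - w)) * hfac

lemma cp_one (m w : ℕ) (hw : w < m) : regIncBeta ((w:ℝ) + 1) ((m:ℝ) - (w:ℝ)) 1 = 1 := by
  rw [cp_regIncBeta_eq m w hw 1]
  rw [Finset.sum_eq_single_of_mem m (by simp [Finset.mem_Ioc, hw])]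
  · simp
  · intro k hk hkm
    rw [Finset.mem_Ioc] at hk
    simp [zero_pow (show m - k ≠ 0 by omega)]

lemma cp_mono (m w : ℕ) (hw : w < m) {x y : ℝ} (hx : 0 ≤ x) (hxy : x ≤ y) (hy : y ≤ 1) :
    regIncBeta ((w:ℝ) + 1) ((m:ℝ) - (w:ℝ)) x ≤ regIncBeta ((w:ℝ) + 1) ((m:ℝ) - (w:ℝ)) y := by
  unfold regIncBeta
  rw [cp_num_eq m w hw, cp_num_eq m w hw]
  have hD : 0 < Real.Gamma ((w:ℝ) + 1) * Real.Gamma ((m:ℝ) - (w:ℝ)) /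
      Real.Gamma (((w:ℝ) + 1) + ((m:ℝ) - (w:ℝ))) := by
    apply div_pos (mul_pos (Real.Gamma_pos_of_pos (by positivity))
      (Real.Gamma_pos_of_pos (sub_pos.mpr (by exact_mod_cast hw))))
    apply Real.Gamma_pos_of_pos
    have : (0:ℝ) < (m:ℝ) + 1 := by positivity
    linarith
  apply div_le_div_of_nonneg_right ?_ hD.le
  apply intervalIntegral.integral_mono_interval le_rfl hx hxy
  · rw [Filter.EventuallyLE, ae_restrict_iff' measurableSet_Ioc]
    filter_upwards with u hu
    have h1 : (0:ℝ) ≤ u := hu.1.le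
    have h2 : (0:ℝ) ≤ 1 - u := by have := hu.2; simp; linarith
    positivity
  · exact (by fun_prop : Continuous fun u : ℝ => u ^ w * (1 - u) ^ (m - 1 - w)).intervalIntegrable 0 y

lemma cp_bound (m w : ℕ) (hw : w < m) {R δ : ℝ} (hR : R ∈ Set.Icc (0:ℝ) 1)
    (hδ : δ ∈ Set.Ioo (0:ℝ) 1)
    (h : ¬ R ≤ betaInv (1 - δ) ((w:ℝ) + 1) ((m:ℝ) - (w:ℝ))) :
    1 - δ ≤ ∑ k ∈ Finset.Ioc w m, (m.choose k : ℝ) * R ^ k * (1 - R) ^ (m - k) := by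
  push_neg at h
  set S := {x : ℝ | x ∈ Set.Icc (0:ℝ) 1 ∧ 1 - δ ≤ regIncBeta ((w:ℝ) + 1) ((m:ℝ) - (w:ℝ)) x}
    with hS
  have h1S : (1:ℝ) ∈ S := by
    constructor
    · exact ⟨zero_le_one, le_refl 1⟩
    · rw [cp_one m w hw]; linarith [hδ.1]
  obtain ⟨x, hxS, hxR⟩ := exists_lt_of_csInf_lt ⟨1, h1S⟩ h
  have := hxS.2
  calc 1 - δ ≤ regIncBeta ((w:ℝ) + 1) ((m:ℝ) - (w:ℝ)) x := hxS.2
    _ ≤ regIncBeta ((w:ℝ) + 1) ((m:ℝ) - (w:ℝ)) R := cp_mono m w hw hxS.1.1 hxR.le hR.2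
    _ = _ := cp_regIncBeta_eq m w hw R

/-- Coverage of the one-sided Clopper–Pearson upper confidence bound: if
`W ~ Binomial(m, R)` and `R_up(w) = BetaInv(1−δ; w+1, m−w)` (with `R_up(m) = 1`),
then `Pr(R ≤ R_up(W)) ≥ 1 − δ`. -/
theorem clopper_pearson_coverage
    {Ω : Type*} [MeasurableSpace Ω] (μ : Measure Ω) [IsProbabilityMeasure μ]
    (m : ℕ) (hm : 1 ≤ m) (R : ℝ) (hR : R ∈ Set.Icc (0 : ℝ) 1)
    (δ : ℝ) (hδ : δ ∈ Set.Ioo (0 : ℝ) 1)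
    (W : Ω → ℕ) (hWmeas : Measurable W)
    (hlaw : ∀ k : ℕ,
      μ {ω | W ω = k} = ENNReal.ofReal ((m.choose k : ℝ) * R ^ k * (1 - R) ^ (m - k))) :
    ENNReal.ofReal (1 - δ)
      ≤ μ {ω | R ≤ if W ω = m then 1
            else betaInv (1 - δ) ((W ω : ℝ) + 1) ((m : ℝ) - (W ω : ℝ))} := by
  set p : ℕ → ℝ := fun k => (m.choose k : ℝ) * R ^ k * (1 - R) ^ (m - k) with hp
  have hp0 : ∀ k, 0 ≤ p k := fun k =>
    mul_nonneg (mul_nonneg (Nat.cast_nonneg _) (pow_nonneg hR.1 _))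
      (pow_nonneg (by linarith [hR.2]) _)
  have hsum1 : ∑ k ∈ Finset.range (m + 1), p k = 1 := by
    have h : ∑ k ∈ Finset.range (m + 1), p k = (R + (1 - R)) ^ m := by
      rw [add_pow R (1 - R) m]
      exact Finset.sum_congr rfl fun k _ => by rw [hp]; ring
    rw [h]; norm_num
  set B : Set ℕ := {k | R ≤ if k = m then 1
      else betaInv (1 - δ) ((k:ℝ) + 1) ((m:ℝ) - (k:ℝ))} with hB
  have hEeq : {ω | R ≤ if W ω = m then 1
      else betaInv (1 - δ) ((W ω : ℝ) + 1) ((m : ℝ) - (W ω : ℝ))} = W ⁻¹' B := rfl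
  rw [hEeq]
  have hmeasB : MeasurableSet (W ⁻¹' B) := hWmeas (MeasurableSet.of_discrete (s := B))
  set A : Finset ℕ := (Finset.range m).filter
    (fun w => ¬ R ≤ betaInv (1 - δ) ((w:ℝ) + 1) ((m:ℝ) - (w:ℝ))) with hA
  -- complement bound
  have hcompl : μ ((W ⁻¹' B)ᶜ) ≤ ENNReal.ofReal δ := by
    have hsub : (W ⁻¹' B)ᶜ ⊆ (⋃ w ∈ A, {ω | W ω = w}) ∪ (⋃ k ∈ {k : ℕ | m < k}, {ω | W ω = k}) := by
      intro ω hω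
      simp only [Set.mem_compl_iff, Set.mem_preimage, hB, Set.mem_setOf_eq] at hω
      rcases lt_trichotomy (W ω) m with hlt | heq | hgt
      · left
        have hmem : W ω ∈ A := by
          rw [hA, Finset.mem_filter, Finset.mem_range]
          refine ⟨hlt, ?_⟩
          rw [if_neg hlt.ne] at hω
          exact hω
        exact Set.mem_iUnion₂.mpr ⟨W ω, hmem, rfl⟩
      · exfalso; rw [if_pos heq] at hω; exact hω hR.2
      · exact Or.inr (Set.mem_biUnion hgt rfl)
    have hnull : μ (⋃ k ∈ {k : ℕ | m < k}, {ω | W ω = k}) = 0 := by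
      refine measure_biUnion_null_iff (Set.to_countable _) |>.mpr ?_
      intro k hk
      rw [hlaw k, Nat.choose_eq_zero_of_lt hk]
      simp
    have h1 : μ ((W ⁻¹' B)ᶜ) ≤ μ (⋃ w ∈ A, {ω | W ω = w}) := by
      refine (measure_mono hsub).trans ?_
      refine (measure_union_le _ _).trans ?_
      rw [hnull, add_zero]
    have h2 : μ (⋃ w ∈ A, {ω | W ω = w}) ≤ ∑ w ∈ A, μ {ω | W ω = w} :=
      measure_biUnion_finset_le A _
    have h3 : ∑ w ∈ A, μ {ω | W ω = w} = ENNReal.ofReal (∑ w ∈ A, p w) := by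
      rw [ENNReal.ofReal_sum_of_nonneg (fun w _ => hp0 w)]
      exact Finset.sum_congr rfl fun w _ => hlaw w
    have h4 : ∑ w ∈ A, p w ≤ δ := by
      rcases Finset.eq_empty_or_nonempty A with hAe | hAne
      · rw [hAe, Finset.sum_empty]; exact hδ.1.le
      · set w' := A.max' hAne with hw'
        have hw'A : w' ∈ A := A.max'_mem hAne
        rw [hA, Finset.mem_filter, Finset.mem_range] at hw'A
        have htail := cp_bound m w' hw'A.1 hR hδ hw'A.2
        have hsub2 : A ⊆ Finset.Iic w' := fun a ha => Finset.mem_Iic.mpr (A.le_max' a ha)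
        have h5 : ∑ w ∈ A, p w ≤ ∑ w ∈ Finset.Iic w', p w :=
          Finset.sum_le_sum_of_subset_of_nonneg hsub2 (fun i _ _ => hp0 i)
        have hdisj : Disjoint (Finset.Iic w') (Finset.Ioc w' m) := by
          rw [Finset.disjoint_left]
          intro a ha hb
          rw [Finset.mem_Iic] at ha
          rw [Finset.mem_Ioc] at hb
          omega
        have hunion : Finset.Iic w' ∪ Finset.Ioc w' m = Finset.range (m + 1) := by
          ext k
          simp only [Finset.mem_union, Finset.mem_Iic, Finset.mem_Ioc, Finset.mem_range]
          omega
        have h6 : ∑ w ∈ Finset.Iic w', p w + ∑ k ∈ Finset.Ioc w' m, p k = 1 := by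
          rw [← Finset.sum_union hdisj, hunion, hsum1]
        have h7 : 1 - δ ≤ ∑ k ∈ Finset.Ioc w' m, p k := htail
        linarith
    calc μ ((W ⁻¹' B)ᶜ) ≤ ENNReal.ofReal (∑ w ∈ A, p w) := h1.trans (h2.trans h3.le)
      _ ≤ ENNReal.ofReal δ := ENNReal.ofReal_le_ofReal h4
  -- conclude
  have hadd : μ (W ⁻¹' B) + μ ((W ⁻¹' B)ᶜ) = 1 := by
    rw [measure_add_measure_compl hmeasB, measure_univ]
  have hone : (1 : ENNReal) ≤ μ (W ⁻¹' B) + ENNReal.ofReal δ := by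
    rw [← hadd]; exact add_le_add_right hcompl _
  calc ENNReal.ofReal (1 - δ) = 1 - ENNReal.ofReal δ := by
        rw [ENNReal.ofReal_sub _ hδ.1.le, ENNReal.ofReal_one]
    _ ≤ μ (W ⁻¹' B) := tsub_le_iff_left.mpr (by rw [add_comm] at hone; exact hone)
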